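/- For every integer p ≥ 1 and every integer n ≥ 0, one has the closed formula C^{(p)}_{n,n} = (−1)^n a^{−n} q^{−2n^2} {n}! Σ_l a^{−2 Σ_{i=1}^{p−1} (p−i) l_i} q^{φ_n(l)} [n choose l], where the sum runs over all multi-indices l = (l_1, …, l_p) of nonnegative integers with l_1 + ⋯ + l_p = n. -/

import Mathlib

open Finset

noncomputable section

/-- The field ℚ(q,a) of rational functions in two indeterminates. -/
abbrev F : Type := FractionRing (MvPolynomial (Fin 2) ℚ)

/-- The indeterminate q. -/
def qv : F := algebraMap (MvPolynomial (Fin 2) ℚ) F (MvPolynomial.X 0)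

/-- The indeterminate a. -/
def av : F := algebraMap (MvPolynomial (Fin 2) ℚ) F (MvPolynomial.X 1)

/-- {n} = q^n - q^{-n}. -/
def qb (n : ℤ) : F := qv ^ n - qv ^ (-n)

/-- {n}_i = {n}{n-1}⋯{n-i+1}. -/
def fall (n : ℤ) (i : ℕ) : F := ∏ j ∈ range i, qb (n - j)

/-- {n}! = {n}_n. -/
def ffact (n : ℕ) : F := fall n n

/-- {n; a} = a q^n - a⁻¹ q^{-n}. -/
def braA (n : ℤ) : F := av * qv ^ n - av⁻¹ * qv ^ (-n)

/-- {n; a}_i = {n;a}{n-1;a}⋯{n-i+1;a}. -/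
def fallA (n : ℤ) (i : ℕ) : F := ∏ j ∈ range i, braA (n - j)

/-- α^i_{m,n} = (-a)^{-i} q^{-i(m+n)+i(i+3)/2} {m}_i {n}_i / {i}!. -/
def alpha (i : ℕ) (m n : ℤ) : F :=
  (-av) ^ (-(i : ℤ)) * qv ^ (-(i : ℤ) * (m + n) + ((i : ℤ) * ((i : ℤ) + 3)) / 2) *
    fall m i * fall n i / ffact i

/-- Partial sum s_i = l_1 + ⋯ + l_i of a multi-index. -/
def psum {p : ℕ} (l : Fin p → ℕ) (i : ℕ) : ℕ :=
  ∑ j ∈ univ.filter (fun j : Fin p => (j : ℕ) < i), l j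

/-- C^{(p)}_{n,k} = Σ_{l_1+⋯+l_p = k} (∏_{i=1}^{p-1} a^{-2 s_i} q^{2 s_i (s_i - 2n + 1)})
    ∏_{i=1}^{p} α^{l_i}_{n-s_{i-1}, n-s_{i-1}}. -/
def Cnk (p n k : ℕ) : F :=
  ∑ l ∈ Finset.Nat.antidiagonalTuple p k,
    (∏ i ∈ range (p - 1),
        av ^ (-(2 : ℤ) * (psum l (i + 1) : ℤ)) *
          qv ^ ((2 : ℤ) * (psum l (i + 1) : ℤ) *
            ((psum l (i + 1) : ℤ) - 2 * (n : ℤ) + 1))) *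
      ∏ i : Fin p,
        alpha (l i) ((n : ℤ) - (psum l (i : ℕ) : ℤ)) ((n : ℤ) - (psum l (i : ℕ) : ℤ))

/-- The Laurent polynomial ring ℤ[q^{±1}, a^{±1}] inside ℚ(q,a). -/
def LaurentZ : Subring F := Subring.closure {qv, av, qv⁻¹, av⁻¹}

/-- The entry l_{i+1} (0-indexed i) of a multi-index, or 0 if out of range. -/
def lget {p : ℕ} (l : Fin p → ℕ) (i : ℕ) : ℕ := if h : i < p then l ⟨i, h⟩ else 0

/-- φ_k(l) = Σ_{i=1}^{p-1} 2 s_i (s_i - 2k + 1) + Σ_{i=1}^{p} l_i(l_i+3)/2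
    + 2 Σ_{i=1}^{p-1} s_i l_{i+1}. -/
def phi (k : ℕ) {p : ℕ} (l : Fin p → ℕ) : ℤ :=
  (∑ i ∈ range (p - 1),
      2 * (psum l (i + 1) : ℤ) * ((psum l (i + 1) : ℤ) - 2 * (k : ℤ) + 1)) +
    (∑ i ∈ range p, ((lget l i : ℤ) * ((lget l i : ℤ) + 3)) / 2) +
    2 * ∑ i ∈ range (p - 1), (psum l (i + 1) : ℤ) * (lget l (i + 1) : ℤ)

/-- [n] = {n}/{1}. -/
def qint (n : ℤ) : F := qb n / qb 1

/-- [n]! = [n][n-1]⋯[1]. -/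
def qfact (n : ℕ) : F := ∏ i ∈ range n, qint ((i : ℤ) + 1)

/-- The q-multinomial coefficient [n choose l] = [n]!/([l_1]!⋯[l_p]!). -/
def qmultinomial {p : ℕ} (n : ℕ) (l : Fin p → ℕ) : F :=
  qfact n / ∏ i : Fin p, qfact (l i)

/-- The balanced Gaussian binomial coefficient [n choose i] = [n]!/([i]![n-i]!). -/
def qbinom (n i : ℕ) : F := qfact n / (qfact i * qfact (n - i))

/-- C̃^{(p)}_{k,k} of formula (17). -/
def Ctilde (p k : ℕ) : F :=
  (-1) ^ k * av ^ (-(k : ℤ)) * qv ^ (-(2 : ℤ) * (k : ℤ) ^ 2) *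
    ∑ l ∈ Finset.Nat.antidiagonalTuple p k,
      av ^ (-(2 : ℤ) *
          ∑ i ∈ range (p - 1), ((p : ℤ) - ((i : ℤ) + 1)) * (lget l i : ℤ)) *
        qv ^ phi k l * qmultinomial k l

-- AUX LEMMAS
lemma qv_ne : qv ≠ 0 := by
  simp only [qv, ne_eq, map_eq_zero_iff _ (IsFractionRing.injective (MvPolynomial (Fin 2) ℚ) F)]
  exact MvPolynomial.X_ne_zero 0

lemma av_ne : av ≠ 0 := by
  simp only [av, ne_eq, map_eq_zero_iff _ (IsFractionRing.injective (MvPolynomial (Fin 2) ℚ) F)]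
  exact MvPolynomial.X_ne_zero 1

lemma qv_pow_ne_one (N : ℕ) (hN : 1 ≤ N) : qv ^ N ≠ 1 := by
  intro h
  have h2 : (algebraMap (MvPolynomial (Fin 2) ℚ) F) (MvPolynomial.X 0 ^ N) =
      (algebraMap (MvPolynomial (Fin 2) ℚ) F) 1 := by
    rw [map_pow, map_one]; exact h
  have h3 := IsFractionRing.injective (MvPolynomial (Fin 2) ℚ) F h2
  have h4 := congrArg (MvPolynomial.eval (fun _ => (2:ℚ))) h3
  simp [MvPolynomial.eval_pow] at h4
  have : (2:ℚ)^N ≥ 2^1 := pow_le_pow_right₀ one_le_two hN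
  rw [h4] at this; norm_num at this

lemma qb_ne (m : ℤ) (hm : 1 ≤ m) : qb m ≠ 0 := by
  intro h
  have h1 : qv ^ m = qv ^ (-m) := by rwa [qb, sub_eq_zero] at h
  have h2 : qv ^ (2*m) = 1 := by
    have := congrArg (· * qv ^ m) h1
    simp only [← zpow_add₀ qv_ne, two_mul] at this ⊢
    rw [this, neg_add_cancel, zpow_zero]
  have h3 : qv ^ ((2*m).toNat) = 1 := by
    rw [← zpow_natCast, Int.toNat_of_nonneg (by omega)]; exact h2
  exact qv_pow_ne_one _ (by omega) h3

lemma ffact_ne (n : ℕ) : ffact n ≠ 0 := by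
  rw [ffact, fall]
  refine Finset.prod_ne_zero_iff.2 fun j hj => qb_ne _ ?_
  have := Finset.mem_range.1 hj; omega

lemma qint_ne (m : ℤ) (hm : 1 ≤ m) : qint m ≠ 0 :=
  div_ne_zero (qb_ne m hm) (qb_ne 1 le_rfl)

lemma qfact_ne (n : ℕ) : qfact n ≠ 0 := by
  rw [qfact]
  exact Finset.prod_ne_zero_iff.2 fun j _ => qint_ne _ (by omega)

lemma zpow_sum' (x : F) (hx : x ≠ 0) (s : Finset ℕ) (f : ℕ → ℤ) :
    x ^ (∑ i ∈ s, f i) = ∏ i ∈ s, x ^ f i := by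
  classical
  induction s using Finset.cons_induction with
  | empty => simp
  | cons a s ha ih => rw [Finset.sum_cons, Finset.prod_cons, zpow_add₀ hx, ih]

lemma lget_eq {p : ℕ} (l : Fin p → ℕ) (i : Fin p) : lget l (i : ℕ) = l i := by
  rw [lget, dif_pos i.isLt]

lemma psum_succ {p : ℕ} (l : Fin p → ℕ) (i : ℕ) :
    psum l (i + 1) = psum l i + lget l i := by
  classical
  rw [psum, psum]
  have h1 : ∀ j : Fin p, ((j:ℕ) < i + 1) ↔ ((j:ℕ) < i ∨ (j:ℕ) = i) := by intro j; omega
  rw [Finset.filter_congr (fun j _ => by rw [h1 j])]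
  rw [Finset.filter_or, Finset.sum_union]
  · congr 1
    by_cases h : i < p
    · have : Finset.univ.filter (fun j : Fin p => (j:ℕ) = i) = {⟨i, h⟩} := by
        ext j; simp [Fin.ext_iff]
      rw [this, Finset.sum_singleton, lget, dif_pos h]
    · have : Finset.univ.filter (fun j : Fin p => (j:ℕ) = i) = ∅ := by
        ext j; simp; omega
      rw [this, Finset.sum_empty, lget, dif_neg h]
  · rw [Finset.disjoint_filter]
    intro j _ hj; omega

lemma psum_eq {p : ℕ} (l : Fin p → ℕ) (i : ℕ) :
    psum l i = ∑ j ∈ range i, lget l j := by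
  induction i with
  | zero => simp [psum]
  | succ i ih => rw [psum_succ, ih, Finset.sum_range_succ]

lemma sum_lget {p : ℕ} (l : Fin p → ℕ) :
    ∑ j ∈ range p, lget l j = ∑ j : Fin p, l j := by
  rw [← Fin.sum_univ_eq_sum_range (fun j => lget l j) p]
  exact Finset.sum_congr rfl fun j _ => lget_eq l j

lemma fall_add (m : ℤ) (b c : ℕ) : fall m (b + c) = fall m b * fall (m - b) c := by
  rw [fall, fall, fall, Finset.prod_range_add]
  congr 1
  refine Finset.prod_congr rfl fun j _ => ?_
  congr 1; push_cast; ring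

lemma fall_prod (g : ℕ → ℕ) (m : ℤ) (p : ℕ) :
    ∏ i ∈ range p, fall (m - (∑ j ∈ range i, g j : ℕ)) (g i) =
      fall m (∑ j ∈ range p, g j) := by
  induction p with
  | zero => simp [fall]
  | succ p ih =>
    rw [Finset.prod_range_succ, Finset.sum_range_succ, ih, fall_add]

lemma ffact_eq (n : ℕ) : ffact n = qb 1 ^ n * qfact n := by
  have h1 : ffact n = ∏ j ∈ range n, qb ((j:ℤ) + 1) := by
    rw [ffact, fall, ← Finset.prod_range_reflect]
    refine Finset.prod_congr rfl fun j hj => ?_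
    have hj' := Finset.mem_range.1 hj
    congr 1; omega
  rw [h1, qfact]
  simp only [qint]
  rw [mul_comm]
  rw [Finset.prod_div_distrib, Finset.prod_const]
  rw [Finset.card_range, div_mul_cancel₀ _ (pow_ne_zero n (qb_ne 1 le_rfl))]

lemma sum_T (G : ℕ → ℤ) (m : ℕ) :
    ∑ i ∈ range m, (∑ j ∈ range (i+1), G j) = ∑ i ∈ range m, ((m:ℤ) - i) * G i := by
  induction m with
  | zero => simp
  | succ m ih =>
    have h : ∀ i ∈ range m, (((m+1:ℕ):ℤ) - i) * G i = ((m:ℤ) - i) * G i + G i := by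
      intro i _; push_cast; ring
    rw [Finset.sum_range_succ, ih, Finset.sum_range_succ (f := G),
      Finset.sum_range_succ (f := fun i => (((m+1:ℕ):ℤ) - i) * G i),
      Finset.sum_congr rfl h, Finset.sum_add_distrib]
    push_cast; ring

lemma sum_GT (p : ℕ) (hp : 1 ≤ p) (G : ℕ → ℤ) :
    ∑ i ∈ range p, G i * (∑ j ∈ range i, G j)
      = ∑ i ∈ range (p-1), (∑ j ∈ range (i+1), G j) * G (i+1) := by
  obtain ⟨m, rfl⟩ : ∃ m, p = m + 1 := ⟨p - 1, by omega⟩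
  rw [Finset.sum_range_succ']
  simp only [Nat.add_sub_cancel, Finset.range_zero, Finset.sum_empty, mul_zero, zero_add, add_zero]
  exact Finset.sum_congr rfl fun i _ => mul_comm _ _

lemma keyQ (p n : ℕ) (hp : 1 ≤ p) (G d : ℕ → ℤ) (hG : ∑ i ∈ range p, G i = (n:ℤ)) :
    ∑ i ∈ range p, (-(G i) * (((n:ℤ) - ∑ j ∈ range i, G j) + ((n:ℤ) - ∑ j ∈ range i, G j)) + d i)
      = -(2:ℤ)*(n:ℤ)^2 + ((∑ i ∈ range p, d i)
        + 2 * ∑ i ∈ range (p-1), (∑ j ∈ range (i+1), G j) * G (i+1)) := by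
  have h1 : ∀ i ∈ range p,
      -(G i) * (((n:ℤ) - ∑ j ∈ range i, G j) + ((n:ℤ) - ∑ j ∈ range i, G j)) + d i
        = (-2*(n:ℤ)) * G i + 2 * (G i * ∑ j ∈ range i, G j) + d i := fun i _ => by ring
  rw [Finset.sum_congr rfl h1, Finset.sum_add_distrib, Finset.sum_add_distrib,
    ← Finset.mul_sum, ← Finset.mul_sum, hG, sum_GT p hp G]
  ring

/-- closed formula for C^{(p)}_{n,n}. -/
theorem Cnn_closed_formula (p n : ℕ) (hp : 1 ≤ p) :
    Cnk p n n =
      (-1) ^ n * av ^ (-(n : ℤ)) * qv ^ (-(2 : ℤ) * (n : ℤ) ^ 2) * ffact n *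
        ∑ l ∈ Finset.Nat.antidiagonalTuple p n,
          av ^ (-(2 : ℤ) *
              ∑ i ∈ range (p - 1), ((p : ℤ) - ((i : ℤ) + 1)) * (lget l i : ℤ)) *
            qv ^ phi n l * qmultinomial n l := by
  rw [Cnk, Finset.mul_sum]
  refine Finset.sum_congr rfl fun l hl => ?_
  have hsum : ∑ i, l i = n := Finset.Nat.mem_antidiagonalTuple.mp hl
  have hg : ∑ j ∈ range p, lget l j = n := by rw [sum_lget]; exact hsum
  have hGZ : ∑ i ∈ range p, (lget l i : ℤ) = (n : ℤ) := by rw [← Nat.cast_sum, hg]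
  have hps : ∀ k, ((psum l k : ℕ) : ℤ) = ∑ j ∈ range k, (lget l j : ℤ) := fun k => by
    rw [psum_eq]; push_cast; rfl
  -- prefactor
  have hpre : (∏ i ∈ range (p - 1),
        av ^ (-(2 : ℤ) * (psum l (i + 1) : ℤ)) *
          qv ^ ((2 : ℤ) * (psum l (i + 1) : ℤ) *
            ((psum l (i + 1) : ℤ) - 2 * (n : ℤ) + 1)))
      = av ^ (∑ i ∈ range (p - 1), -(2 : ℤ) * (psum l (i + 1) : ℤ)) *
        qv ^ (∑ i ∈ range (p - 1), (2 : ℤ) * (psum l (i + 1) : ℤ) *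
            ((psum l (i + 1) : ℤ) - 2 * (n : ℤ) + 1)) := by
    rw [Finset.prod_mul_distrib,
      zpow_sum' av av_ne _ (fun i => -(2 : ℤ) * (psum l (i + 1) : ℤ)),
      zpow_sum' qv qv_ne _ (fun i => (2 : ℤ) * (psum l (i + 1) : ℤ) *
            ((psum l (i + 1) : ℤ) - 2 * (n : ℤ) + 1))]
  -- alpha product to range form
  have hBr : (∏ i : Fin p,
        alpha (l i) ((n : ℤ) - (psum l (i : ℕ) : ℤ)) ((n : ℤ) - (psum l (i : ℕ) : ℤ)))
      = ∏ i ∈ range p,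
          alpha (lget l i) ((n : ℤ) - (psum l i : ℤ)) ((n : ℤ) - (psum l i : ℤ)) := by
    rw [← Fin.prod_univ_eq_prod_range
      (fun i => alpha (lget l i) ((n : ℤ) - (psum l i : ℤ)) ((n : ℤ) - (psum l i : ℤ))) p]
    exact Finset.prod_congr rfl fun i _ => by rw [lget_eq]
  -- telescoping of falling factorials
  have hfall : ∏ i ∈ range p, fall ((n : ℤ) - (psum l i : ℤ)) (lget l i) = ffact n := by
    have h2 := fall_prod (lget l) (n : ℤ) p
    rw [hg] at h2
    rw [ffact, ← h2]
    exact Finset.prod_congr rfl fun i _ => by rw [psum_eq]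
  -- expanded alpha product
  have halpha : (∏ i ∈ range p,
        alpha (lget l i) ((n : ℤ) - (psum l i : ℤ)) ((n : ℤ) - (psum l i : ℤ)))
      = (-av) ^ (∑ i ∈ range p, -(lget l i : ℤ)) *
          qv ^ (∑ i ∈ range p,
            (-(lget l i : ℤ) * (((n : ℤ) - (psum l i : ℤ)) + ((n : ℤ) - (psum l i : ℤ))) +
              ((lget l i : ℤ) * ((lget l i : ℤ) + 3)) / 2)) *
          (ffact n * ffact n) * (∏ i ∈ range p, ffact (lget l i))⁻¹ := by
    simp only [alpha, div_eq_mul_inv, Finset.prod_mul_distrib]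
    rw [Finset.prod_inv_distrib, ← zpow_sum' (-av) (neg_ne_zero.2 av_ne) _
        (fun i => -(lget l i : ℤ)),
      ← zpow_sum' qv qv_ne _ (fun i =>
        -(lget l i : ℤ) * (((n : ℤ) - (psum l i : ℤ)) + ((n : ℤ) - (psum l i : ℤ))) +
          ((lget l i : ℤ) * ((lget l i : ℤ) + 3)) / 2),
      hfall]
    ring
  -- sign
  have hneg : (-av) ^ (∑ i ∈ range p, -(lget l i : ℤ)) = (-1 : F) ^ n * av ^ (-(n : ℤ)) := by
    have he : (∑ i ∈ range p, -(lget l i : ℤ)) = -(n : ℤ) := by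
      rw [Finset.sum_neg_distrib, hGZ]
    rw [he, show (-av) = (-1 : F) * av from by ring, mul_zpow]
    congr 1
    have h1 : ((-1 : F) ^ (n : ℤ))⁻¹ = (-1 : F) ^ n := by
      rw [zpow_natCast]
      exact inv_eq_of_mul_eq_one_left (by rw [← pow_add]; exact Even.neg_one_pow ⟨n, rfl⟩)
    rw [zpow_neg, h1]
  -- a-exponent identity
  have hA2 : ∑ i ∈ range (p - 1), (psum l (i + 1) : ℤ)
      = ∑ i ∈ range (p - 1), ((p : ℤ) - ((i : ℤ) + 1)) * (lget l i : ℤ) :=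
    calc ∑ i ∈ range (p - 1), (psum l (i + 1) : ℤ)
        = ∑ i ∈ range (p - 1), ∑ j ∈ range (i + 1), (lget l j : ℤ) :=
          Finset.sum_congr rfl fun i _ => hps (i + 1)
      _ = ∑ i ∈ range (p - 1), (((p - 1 : ℕ) : ℤ) - i) * (lget l i : ℤ) :=
          sum_T (fun j => (lget l j : ℤ)) (p - 1)
      _ = ∑ i ∈ range (p - 1), ((p : ℤ) - ((i : ℤ) + 1)) * (lget l i : ℤ) :=
          Finset.sum_congr rfl fun i _ => by rw [Nat.cast_sub hp]; push_cast; ring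
  have e1 : av ^ (∑ i ∈ range (p - 1), -(2 : ℤ) * (psum l (i + 1) : ℤ)) * av ^ (-(n : ℤ))
      = av ^ (-(n : ℤ)) *
        av ^ (-(2 : ℤ) * ∑ i ∈ range (p - 1), ((p : ℤ) - ((i : ℤ) + 1)) * (lget l i : ℤ)) := by
    rw [← zpow_add₀ av_ne, ← zpow_add₀ av_ne]
    congr 1
    rw [← Finset.mul_sum, hA2]
    ring
  -- q-exponent identity
  have hkey := keyQ p n hp (fun j => (lget l j : ℤ))
    (fun i => ((lget l i : ℤ) * ((lget l i : ℤ) + 3)) / 2) hGZ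
  have hQ : (∑ i ∈ range (p - 1), (2 : ℤ) * (psum l (i + 1) : ℤ) *
          ((psum l (i + 1) : ℤ) - 2 * (n : ℤ) + 1)) +
        (∑ i ∈ range p,
          (-(lget l i : ℤ) * (((n : ℤ) - (psum l i : ℤ)) + ((n : ℤ) - (psum l i : ℤ))) +
            ((lget l i : ℤ) * ((lget l i : ℤ) + 3)) / 2))
      = -(2 : ℤ) * (n : ℤ) ^ 2 + phi n l := by
    rw [phi]
    simp only [hps]
    linear_combination hkey
  have e2 : qv ^ (∑ i ∈ range (p - 1), (2 : ℤ) * (psum l (i + 1) : ℤ) *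
          ((psum l (i + 1) : ℤ) - 2 * (n : ℤ) + 1)) *
        qv ^ (∑ i ∈ range p,
          (-(lget l i : ℤ) * (((n : ℤ) - (psum l i : ℤ)) + ((n : ℤ) - (psum l i : ℤ))) +
            ((lget l i : ℤ) * ((lget l i : ℤ) + 3)) / 2))
      = qv ^ (-(2 : ℤ) * (n : ℤ) ^ 2) * qv ^ phi n l := by
    rw [← zpow_add₀ qv_ne, ← zpow_add₀ qv_ne, hQ]
  -- factorial / multinomial identity
  have hfm : ffact n * ffact n * (∏ i ∈ range p, ffact (lget l i))⁻¹
      = ffact n * qmultinomial n l := by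
    have hden : ∏ i : Fin p, qfact (l i) = ∏ i ∈ range p, qfact (lget l i) := by
      rw [← Fin.prod_univ_eq_prod_range (fun i => qfact (lget l i)) p]
      exact Finset.prod_congr rfl fun i _ => by rw [lget_eq]
    have hff : ∏ i ∈ range p, ffact (lget l i)
        = qb 1 ^ n * ∏ i ∈ range p, qfact (lget l i) := by
      simp only [ffact_eq]
      rw [Finset.prod_mul_distrib, Finset.prod_pow_eq_pow_sum, hg]
    have h1 : (qb 1 : F) ^ n ≠ 0 := pow_ne_zero _ (qb_ne 1 le_rfl)
    have h2 : (∏ i ∈ range p, qfact (lget l i)) ≠ 0 :=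
      Finset.prod_ne_zero_iff.2 fun i _ => qfact_ne _
    rw [qmultinomial, hden, ffact_eq n, hff]
    field_simp
  rw [hpre, hBr, halpha, hneg]
  trans ((-1 : F) ^ n *
      (av ^ (∑ i ∈ range (p - 1), -(2 : ℤ) * (psum l (i + 1) : ℤ)) * av ^ (-(n : ℤ))) *
      (qv ^ (∑ i ∈ range (p - 1), (2 : ℤ) * (psum l (i + 1) : ℤ) *
          ((psum l (i + 1) : ℤ) - 2 * (n : ℤ) + 1)) *
        qv ^ (∑ i ∈ range p,
          (-(lget l i : ℤ) * (((n : ℤ) - (psum l i : ℤ)) + ((n : ℤ) - (psum l i : ℤ))) +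
            ((lget l i : ℤ) * ((lget l i : ℤ) + 3)) / 2))) *
      (ffact n * ffact n * (∏ i ∈ range p, ffact (lget l i))⁻¹))
  · ring
  · rw [e1, e2, hfm]; ring
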